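/- Let δ ~ N(μ, σ²) with σ > 0 and ε ∈ (0, 1/2). If μ + σ·φ(Ψ⁻¹(1−ε))/ε ≤ 0 (the CVaR condition), then μ + σ·Ψ⁻¹(1−ε) ≤ 0, and hence P(δ ≤ 0) ≥ 1 − ε: the deterministic CVaR reformulation implies the deterministic chance-constraint reformulation. -/

import Mathlib

open MeasureTheory ProbabilityTheory Matrix

/-- CDF of the standard normal distribution. -/
noncomputable def stdCDF (t : ℝ) : ℝ := cdf (gaussianReal 0 1) t

/-- Quantile (inverse CDF) of the standard normal distribution. -/
noncomputable def stdQuantile (p : ℝ) : ℝ := sInf {t : ℝ | p ≤ stdCDF t}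

/-- Density of the standard normal distribution. -/
noncomputable def stdPDF (t : ℝ) : ℝ := Real.exp (-t ^ 2 / 2) / Real.sqrt (2 * Real.pi)

/-- Conditional Value-at-Risk at level ε (Rockafellar–Uryasev form). -/
noncomputable def cvar {Ω : Type*} [MeasurableSpace Ω] (P : Measure Ω) (Z : Ω → ℝ)
    (ε : ℝ) : ℝ := ⨅ α : ℝ, (ε⁻¹ * ∫ ω, max (Z ω + α) 0 ∂P - α)

open Set Filter Topology

lemma stdPDF_eq : stdPDF = gaussianPDFReal 0 1 := by
  funext x
  simp [stdPDF, gaussianPDFReal, div_eq_inv_mul]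

lemma integrable_stdPDF : Integrable stdPDF := by
  rw [stdPDF_eq]; exact integrable_gaussianPDFReal 0 1

lemma stdPDF_pos (x : ℝ) : 0 < stdPDF x := by
  rw [stdPDF_eq]; exact gaussianPDFReal_pos 0 1 x one_ne_zero

lemma continuous_stdPDF : Continuous stdPDF := by
  unfold stdPDF; fun_prop

lemma stdCDF_eq_integral (t : ℝ) : stdCDF t = ∫ x in Iic t, stdPDF x := by
  rw [stdCDF, cdf_eq_real, measureReal_def, gaussianReal_apply_eq_integral 0 one_ne_zero,
    ENNReal.toReal_ofReal (integral_nonneg fun x => gaussianPDFReal_nonneg 0 1 x), stdPDF_eq]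

lemma hasDerivAt_neg_stdPDF (x : ℝ) : HasDerivAt (fun y => -stdPDF y) (x * stdPDF x) x := by
  have h : HasDerivAt (fun y : ℝ => -y ^ 2 / 2) (-x) x := by
    have := ((hasDerivAt_pow 2 x).neg).div_const 2
    simpa using this.congr_deriv (by ring)
  have h2 := (h.exp).div_const (Real.sqrt (2 * Real.pi))
  have h3 := h2.neg
  have h4 : HasDerivAt (fun y => -stdPDF y) (-(Real.exp (-x ^ 2 / 2) * -x / Real.sqrt (2 * Real.pi))) x := h3
  convert h4 using 1
  simp [stdPDF]; ring

lemma stdCDF_sub (s t : ℝ) : stdCDF t - stdCDF s = ∫ x in s..t, stdPDF x := by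
  rw [stdCDF_eq_integral, stdCDF_eq_integral]
  exact intervalIntegral.integral_Iic_sub_Iic integrable_stdPDF.integrableOn
    integrable_stdPDF.integrableOn

lemma continuous_stdCDF : Continuous stdCDF := by
  have h := integrable_stdPDF.continuous_primitive 0
  have : stdCDF = fun t => stdCDF 0 + ∫ x in (0:ℝ)..t, stdPDF x := by
    funext t; rw [← stdCDF_sub 0 t]; ring
  rw [this]
  exact continuous_const.add h

lemma strictMono_stdCDF : StrictMono stdCDF := by
  intro s t hst
  have h : 0 < ∫ x in s..t, stdPDF x := by
    apply intervalIntegral.intervalIntegral_pos_of_pos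
    · exact integrable_stdPDF.intervalIntegrable
    · exact fun x => stdPDF_pos x
    · exact hst
  have := stdCDF_sub s t
  linarith

lemma stdCDF_total (t : ℝ) : stdCDF t + ∫ x in Ioi t, stdPDF x = 1 := by
  rw [stdCDF_eq_integral]
  rw [intervalIntegral.integral_Iic_add_Ioi integrable_stdPDF.integrableOn
    integrable_stdPDF.integrableOn]
  rw [stdPDF_eq]
  exact integral_gaussianPDFReal_eq_one 0 one_ne_zero

lemma stdCDF_zero : stdCDF 0 = 1 / 2 := by
  have h1 := stdCDF_total 0
  have h2 : stdCDF 0 = ∫ x in Ioi (0:ℝ), stdPDF x := by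
    rw [stdCDF_eq_integral]
    have : ∀ x : ℝ, stdPDF (-x) = stdPDF x := by
      intro x; simp [stdPDF]
    calc ∫ x in Iic (0:ℝ), stdPDF x = ∫ x in Iic (0:ℝ), stdPDF (-x) := by simp_rw [this]
      _ = ∫ x in Ioi (-(0:ℝ)), stdPDF x := integral_comp_neg_Iic 0 stdPDF
      _ = ∫ x in Ioi (0:ℝ), stdPDF x := by rw [neg_zero]
  linarith

lemma stdCDF_stdQuantile {p : ℝ} (hp0 : 0 < p) (hp1 : p < 1)
    {q : ℝ} (hq : q = sInf {t : ℝ | p ≤ stdCDF t}) : stdCDF q = p := by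
  set S := {t : ℝ | p ≤ stdCDF t} with hS
  have hclosed : IsClosed S := isClosed_le continuous_const continuous_stdCDF
  have hne : S.Nonempty := by
    have := (tendsto_cdf_atTop (gaussianReal 0 1)).eventually (eventually_ge_nhds hp1)
    obtain ⟨t, ht⟩ := this.exists
    exact ⟨t, ht⟩
  have hbdd : BddBelow S := by
    have := (tendsto_cdf_atBot (gaussianReal 0 1)).eventually (eventually_lt_nhds hp0)
    rw [eventually_atBot] at this
    obtain ⟨a, ha⟩ := this
    refine ⟨a, fun s hs => ?_⟩
    by_contra hcon
    push_neg at hcon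
    exact absurd hs (by simpa [hS, stdCDF] using not_le.mpr (ha s hcon.le))
  have hmem : q ∈ S := hq ▸ hclosed.csInf_mem hne hbdd
  refine le_antisymm ?_ hmem
  by_contra hcon
  push_neg at hcon
  have hopen : IsOpen {t : ℝ | p < stdCDF t} := isOpen_lt continuous_const continuous_stdCDF
  obtain ⟨δ, hδ, hball⟩ := Metric.isOpen_iff.mp hopen q hcon
  have ht : q - δ / 2 ∈ S := by
    have : q - δ / 2 ∈ Metric.ball q δ := by
      simp only [Metric.mem_ball, Real.dist_eq]
      rw [abs_lt]; constructor <;> linarith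
    have h2 : p < stdCDF (q - δ / 2) := hball this
    exact h2.le
  have := csInf_le hbdd ht
  rw [← hq] at this
  linarith

lemma tendsto_stdPDF_atTop : Tendsto stdPDF atTop (𝓝 0) := by
  have h1 : Tendsto (fun y : ℝ => -y ^ 2 / 2) atTop atBot := by
    apply Filter.Tendsto.atBot_div_const (by norm_num : (0:ℝ) < 2)
    exact tendsto_neg_atBot_iff.mpr (tendsto_pow_atTop two_ne_zero)
  have h2 := (Real.tendsto_exp_atBot.comp h1).div_const (Real.sqrt (2 * Real.pi))
  have : stdPDF = fun a => Real.exp (-a ^ 2 / 2) / (Real.sqrt 2 * Real.sqrt Real.pi) := by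
    funext a; rw [stdPDF, Real.sqrt_mul (by norm_num)]
  rw [this]
  simpa [Function.comp] using h2

lemma mills {q : ℝ} (hq : 0 ≤ q) : q * ∫ x in Ioi q, stdPDF x ≤ stdPDF q := by
  have hderiv : ∀ x ∈ Ici q, HasDerivAt (fun y => -stdPDF y) (x * stdPDF x) x :=
    fun x _ => hasDerivAt_neg_stdPDF x
  have hpos : ∀ x ∈ Ioi q, 0 ≤ x * stdPDF x := fun x hx =>
    mul_nonneg (le_trans hq (le_of_lt hx)) (stdPDF_pos x).le
  have htend : Tendsto (fun y => -stdPDF y) atTop (𝓝 0) := by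
    simpa using tendsto_stdPDF_atTop.neg
  have hint := integrableOn_Ioi_deriv_of_nonneg' hderiv hpos htend
  have hval := integral_Ioi_of_hasDerivAt_of_nonneg' hderiv hpos htend
  rw [zero_sub, neg_neg] at hval
  rw [← hval, ← integral_const_mul]
  apply MeasureTheory.setIntegral_mono_on
  · exact (integrable_stdPDF.const_mul q).integrableOn
  · exact hint
  · exact measurableSet_Ioi
  · exact fun x hx => mul_le_mul_of_nonneg_right (le_of_lt hx) (stdPDF_pos x).le

lemma gauss_map (μ σ : ℝ) :
    (gaussianReal 0 1).map (fun x => σ * x + μ) = gaussianReal μ ⟨σ ^ 2, sq_nonneg σ⟩ := by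
  have h1 : (gaussianReal 0 1).map (σ * ·) = gaussianReal 0 ⟨σ ^ 2, sq_nonneg σ⟩ := by
    rw [gaussianReal_map_const_mul]
    congr 1
    · ring
    · ext; simp; rfl
  have h2 : (fun x : ℝ => σ * x + μ) = (· + μ) ∘ (σ * ·) := rfl
  rw [h2, ← Measure.map_map (measurable_id'.add_const μ) (measurable_const_mul σ), h1]
  have h3 := gaussianReal_map_add_const (μ := 0) (v := ⟨σ ^ 2, sq_nonneg σ⟩) μ
  rw [zero_add] at h3
  exact h3

/-- The deterministic CVaR reformulation implies the deterministic chance-constraint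
reformulation, and hence the chance constraint itself. -/
theorem cvar_reform_implies_chance_reform (μ σ ε : ℝ) (hσ : 0 < σ)
    (hε : 0 < ε) (hε2 : ε < 1 / 2)
    (h : μ + σ * (stdPDF (stdQuantile (1 - ε)) / ε) ≤ 0) :
    μ + σ * stdQuantile (1 - ε) ≤ 0 ∧
      ((gaussianReal μ ⟨σ ^ 2, sq_nonneg σ⟩) {t : ℝ | t ≤ 0}).toReal ≥ 1 - ε := by
  set q := stdQuantile (1 - ε) with hqdef
  have hcdfq : stdCDF q = 1 - ε :=
    stdCDF_stdQuantile (by linarith) (by linarith) (by rw [hqdef]; rfl)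
  have hq0 : 0 < q := by
    by_contra h'
    push_neg at h'
    have := strictMono_stdCDF.monotone h'
    rw [hcdfq, stdCDF_zero] at this
    linarith
  have htail : ∫ x in Ioi q, stdPDF x = ε := by
    have := stdCDF_total q
    linarith
  have hmills : q * ε ≤ stdPDF q := by rw [← htail]; exact mills hq0.le
  have hq_le : q ≤ stdPDF q / ε := by rw [le_div_iff₀ hε]; linarith
  have h1 : μ + σ * q ≤ 0 := by nlinarith
  refine ⟨h1, ?_⟩
  have hset : (fun x : ℝ => σ * x + μ) ⁻¹' {t : ℝ | t ≤ 0} = Iic (-μ / σ) := by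
    ext x
    simp only [Set.mem_preimage, Set.mem_setOf_eq, Set.mem_Iic, le_div_iff₀ hσ]
    constructor <;> intro <;> linarith
  have hmeas : MeasurableSet {t : ℝ | t ≤ 0} := by
    have : {t : ℝ | t ≤ 0} = Iic 0 := rfl
    rw [this]; exact measurableSet_Iic
  rw [← gauss_map μ σ, Measure.map_apply (by fun_prop) hmeas, hset]
  have hcdf : ((gaussianReal 0 1) (Iic (-μ / σ))).toReal = stdCDF (-μ / σ) :=
    (cdf_eq_real _ _).symm
  rw [hcdf]
  have hle : q ≤ -μ / σ := by
    rw [le_div_iff₀ hσ]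
    linarith
  calc (1 : ℝ) - ε = stdCDF q := hcdfq.symm
    _ ≤ stdCDF (-μ / σ) := strictMono_stdCDF.monotone hle
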